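/- Let n ≥ 1 and let A be an MR-subalgebra of 𝓛ₙ with tp(A) = ⟨t₁, …, tₙ⟩ and r = Σᵢ i·tᵢ. Then the freezing subgroup Fr(A) = {φ ∈ Aut(𝓛ₙ) : φ(x) = x for every x ∈ A} has cardinality 2^{n−r} · (n−r)! · ∏_{i=1}^{n} (i!)^{tᵢ}. -/

import Mathlib

@[ext] structure Cube (n : ℕ) where
  pos : Finset (Fin n)
  neg : Finset (Fin n)
  disj : Disjoint pos neg

namespace Cube
variable {n : ℕ}

instance : PartialOrder (Cube n) where
  le x y := y.pos ⊆ x.pos ∧ y.neg ⊆ x.neg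
  le_refl x := ⟨subset_rfl, subset_rfl⟩
  le_trans x y z h₁ h₂ := ⟨h₂.1.trans h₁.1, h₂.2.trans h₁.2⟩
  le_antisymm x y h₁ h₂ :=
    Cube.ext (subset_antisymm h₂.1 h₁.1) (subset_antisymm h₂.2 h₁.2)

instance : OrderTop (Cube n) where
  top := ⟨∅, ∅, by simp⟩
  le_top x := ⟨Finset.empty_subset _, Finset.empty_subset _⟩

instance : SemilatticeSup (Cube n) where
  sup x y := ⟨x.pos ∩ y.pos, x.neg ∩ y.neg,
    x.disj.mono Finset.inter_subset_left Finset.inter_subset_left⟩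
  le_sup_left x y := ⟨Finset.inter_subset_left, Finset.inter_subset_left⟩
  le_sup_right x y := ⟨Finset.inter_subset_right, Finset.inter_subset_right⟩
  sup_le x y z hx hy := ⟨Finset.subset_inter hx.1 hy.1, Finset.subset_inter hx.2 hy.2⟩

/-- The reflection `Δ(x, y)` of `y` through the centre of `x`. -/
def delta (x y : Cube n) : Cube n :=
  ⟨x.pos ∪ (y.neg \ x.neg), x.neg ∪ (y.pos \ x.pos), by
    simp only [Finset.disjoint_union_left, Finset.disjoint_union_right]
    refine ⟨⟨x.disj, Finset.sdiff_disjoint⟩, Finset.disjoint_sdiff, ?_⟩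
    exact y.disj.symm.mono Finset.sdiff_subset Finset.sdiff_subset⟩

lemma delta_le (x y : Cube n) : delta x y ≤ x :=
  ⟨Finset.subset_union_left, Finset.subset_union_left⟩

/-- The co-rank of a face of the `n`-cube. -/
def corank (x : Cube n) : ℕ := (x.pos ∪ x.neg).card

/-- The set of coatoms of `𝓛ₙ` lying above `a`. -/
def coatomsAbove (a : Cube n) : Set (Cube n) := {c | corank c = 1 ∧ a ≤ c}

/-- `A` is an MR-subalgebra of `𝓛ₙ`. -/
def IsMRSub (A : Set (Cube n)) : Prop :=
  ⊤ ∈ A ∧ (∀ x ∈ A, ∀ y ∈ A, x ⊔ y ∈ A) ∧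
    (∀ x ∈ A, ∀ y ∈ A, y ≤ x → delta x y ∈ A) ∧
    (∀ x ∈ A, ∀ y ∈ A, ∃ m ∈ A, IsGLB {x, delta (x ⊔ y) y} m)

/-- The coatoms of a subalgebra `A`: maximal elements of `A \ {⊤}`. -/
def coAt (A : Set (Cube n)) : Set (Cube n) :=
  {a | a ∈ A ∧ a ≠ ⊤ ∧ ∀ b ∈ A, b ≠ ⊤ → a ≤ b → b = a}

/-- The coatoms `a` of `A` with `|𝒞ₐ| = i`. -/
def typeSet (A : Set (Cube n)) (i : ℕ) : Set (Cube n) :=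
  {a | a ∈ coAt A ∧ (coatomsAbove a).ncard = i}

/-- An order automorphism of `𝓛ₙ` is a cubic automorphism when it preserves `Δ`. -/
def IsAut (φ : Cube n ≃o Cube n) : Prop :=
  ∀ x y : Cube n, y ≤ x → φ (delta x y) = delta (φ x) (φ y)

/-- The set of automorphisms of `𝓛ₙ`. -/
def AutSet (n : ℕ) : Set (Cube n ≃o Cube n) := {φ | IsAut φ}

/-- An automorphism of the subposet `A` preserving `Δ`. -/
def IsSubAut {A : Set (Cube n)} (ψ : A ≃o A) : Prop :=
  ∀ (x y : A), (y : Cube n) ≤ (x : Cube n) → ∀ h : delta ↑x ↑y ∈ A,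
    (ψ ⟨delta ↑x ↑y, h⟩ : Cube n) = delta ↑(ψ x) ↑(ψ y)

end Cube

namespace Cube
variable {n : ℕ}

lemma le_def' {x y : Cube n} : x ≤ y ↔ y.pos ⊆ x.pos ∧ y.neg ⊆ x.neg := Iff.rfl

@[simp] lemma top_pos' : (⊤ : Cube n).pos = ∅ := rfl
@[simp] lemma top_neg' : (⊤ : Cube n).neg = ∅ := rfl
@[simp] lemma sup_pos' (x y : Cube n) : (x ⊔ y).pos = x.pos ∩ y.pos := rfl
@[simp] lemma sup_neg' (x y : Cube n) : (x ⊔ y).neg = x.neg ∩ y.neg := rfl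
@[simp] lemma delta_pos' (x y : Cube n) : (delta x y).pos = x.pos ∪ (y.neg \ x.neg) := rfl
@[simp] lemma delta_neg' (x y : Cube n) : (delta x y).neg = x.neg ∪ (y.pos \ x.pos) := rfl

instance : DecidableEq (Cube n) := fun x y =>
  decidable_of_iff (x.pos = y.pos ∧ x.neg = y.neg) (Cube.ext_iff).symm

noncomputable instance : Fintype (Cube n) :=
  Fintype.ofInjective (fun x : Cube n => (x.pos, x.neg))
    (fun _ _ h => Cube.ext (congrArg Prod.fst h) (congrArg Prod.snd h))

lemma eq_top_iff' {x : Cube n} : x = ⊤ ↔ x.pos = ∅ ∧ x.neg = ∅ := Cube.ext_iff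

/-- the antipode -/
def anti (x : Cube n) : Cube n := ⟨x.neg, x.pos, x.disj.symm⟩

@[simp] lemma anti_pos (x : Cube n) : (anti x).pos = x.neg := rfl
@[simp] lemma anti_neg (x : Cube n) : (anti x).neg = x.pos := rfl
@[simp] lemma anti_anti (x : Cube n) : anti (anti x) = x := rfl

lemma delta_top (x : Cube n) : delta ⊤ x = anti x := by
  apply Cube.ext <;> simp [anti]

@[simp] lemma anti_top : anti (⊤ : Cube n) = ⊤ := rfl

lemma anti_le_anti {x y : Cube n} (h : x ≤ y) : anti x ≤ anti y := ⟨h.2, h.1⟩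

lemma anti_eq_top_iff {x : Cube n} : anti x = ⊤ ↔ x = ⊤ := by
  simp [eq_top_iff', anti, and_comm]

/-- single-coordinate coatoms -/
def cc (e : Fin n) : Bool → Cube n
  | true => ⟨{e}, ∅, by simp⟩
  | false => ⟨∅, {e}, by simp⟩

@[simp] lemma cc_true_pos (e : Fin n) : (cc e true).pos = {e} := rfl
@[simp] lemma cc_true_neg (e : Fin n) : (cc e true).neg = ∅ := rfl
@[simp] lemma cc_false_pos (e : Fin n) : (cc e false).pos = ∅ := rfl
@[simp] lemma cc_false_neg (e : Fin n) : (cc e false).neg = {e} := rfl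

@[simp] lemma anti_cc (e : Fin n) (b : Bool) : anti (cc e b) = cc e (!b) := by
  cases b <;> rfl

lemma cc_ne_top (e : Fin n) (b : Bool) : cc e b ≠ ⊤ := by
  cases b <;> simp [eq_top_iff']

lemma cc_inj {e f : Fin n} {b c : Bool} (h : cc e b = cc f c) : e = f ∧ b = c := by
  cases b <;> cases c
  · exact ⟨Finset.singleton_inj.1 (congrArg Cube.neg h), rfl⟩
  · exact absurd (congrArg Cube.pos h) (fun h' => Finset.singleton_ne_empty f h'.symm)
  · exact absurd (congrArg Cube.pos h) (by simp)
  · exact ⟨Finset.singleton_inj.1 (congrArg Cube.pos h), rfl⟩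

lemma le_cc_true {x : Cube n} {e : Fin n} : x ≤ cc e true ↔ e ∈ x.pos := by
  simp [le_def', Finset.singleton_subset_iff]

lemma le_cc_false {x : Cube n} {e : Fin n} : x ≤ cc e false ↔ e ∈ x.neg := by
  simp [le_def', Finset.singleton_subset_iff]

lemma le_cc {x : Cube n} {e : Fin n} {b : Bool} :
    x ≤ cc e b ↔ (if b then e ∈ x.pos else e ∈ x.neg) := by
  cases b <;> simp [le_cc_true, le_cc_false]

lemma isCoatom_cc (e : Fin n) (b : Bool) : IsCoatom (cc e b) := by
  refine ⟨cc_ne_top e b, fun x hx => ?_⟩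
  have hle := hx.le
  have hne := hx.ne'
  cases b
  · have h1 : x.pos = ∅ := Finset.subset_empty.1 hle.1
    rcases Finset.subset_singleton_iff.1 hle.2 with h2 | h2
    · exact eq_top_iff'.2 ⟨h1, h2⟩
    · exact absurd (Cube.ext h1 h2) hne
  · have h2 : x.neg = ∅ := Finset.subset_empty.1 hle.2
    rcases Finset.subset_singleton_iff.1 hle.1 with h1 | h1
    · exact eq_top_iff'.2 ⟨h1, h2⟩
    · exact absurd (Cube.ext h1 h2) hne

lemma isCoatom_iff_cc {x : Cube n} : IsCoatom x ↔ ∃ e b, x = cc e b := by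
  constructor
  · intro hx
    have hne : x ≠ ⊤ := hx.1
    have : (x.pos ∪ x.neg).Nonempty := by
      rw [Finset.nonempty_iff_ne_empty]
      intro h
      rw [Finset.union_eq_empty] at h
      exact hne (eq_top_iff'.2 h)
    obtain ⟨e, he⟩ := this
    rcases Finset.mem_union.1 he with he | he
    · refine ⟨e, true, ?_⟩
      by_contra hne'
      exact (cc_ne_top e true) (hx.2 _ (lt_of_le_of_ne (le_cc_true.2 he) hne'))
    · refine ⟨e, false, ?_⟩
      by_contra hne'
      exact (cc_ne_top e false) (hx.2 _ (lt_of_le_of_ne (le_cc_false.2 he) hne'))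
  · rintro ⟨e, b, rfl⟩; exact isCoatom_cc e b

lemma corank_eq_one_iff {x : Cube n} : corank x = 1 ↔ ∃ e b, x = cc e b := by
  constructor
  · intro h
    obtain ⟨e, he⟩ := Finset.card_eq_one.1 h
    rcases Finset.mem_union.1 (he ▸ Finset.mem_singleton_self e :
        e ∈ x.pos ∪ x.neg) with hm | hm
    · refine ⟨e, true, Cube.ext ?_ ?_⟩
      · show x.pos = {e}
        refine subset_antisymm (fun f hf => ?_) (Finset.singleton_subset_iff.2 hm)
        rw [← he]; exact Finset.mem_union_left _ hf
      · show x.neg = ∅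
        rw [Finset.eq_empty_iff_forall_notMem]
        intro f hf
        have h2 : f ∈ x.pos ∪ x.neg := Finset.mem_union_right _ hf
        rw [he, Finset.mem_singleton] at h2
        subst h2
        exact (Finset.disjoint_left.1 x.disj hm) hf
    · refine ⟨e, false, Cube.ext ?_ ?_⟩
      · show x.pos = ∅
        rw [Finset.eq_empty_iff_forall_notMem]
        intro f hf
        have h2 : f ∈ x.pos ∪ x.neg := Finset.mem_union_left _ hf
        rw [he, Finset.mem_singleton] at h2
        subst h2
        exact (Finset.disjoint_left.1 x.disj hf) hm
      · show x.neg = {e}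
        refine subset_antisymm (fun f hf => ?_) (Finset.singleton_subset_iff.2 hm)
        rw [← he]; exact Finset.mem_union_right _ hf
  · rintro ⟨e, b, rfl⟩
    cases b <;> simp [corank]

/-! ### Signed permutations acting on the cube -/

def act (σ : Equiv.Perm (Fin n)) (ε : Fin n → Bool) (x : Cube n) : Cube n where
  pos := (x.pos.filter (fun e => ε e = true) ∪ x.neg.filter (fun e => ¬ ε e = true)).image σ
  neg := (x.neg.filter (fun e => ε e = true) ∪ x.pos.filter (fun e => ¬ ε e = true)).image σ
  disj := by
    rw [Finset.disjoint_image σ.injective, Finset.disjoint_left]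
    intro a ha ha'
    simp only [Finset.mem_union, Finset.mem_filter] at ha ha'
    have hd := Finset.disjoint_left.1 x.disj
    rcases ha with h | h <;> rcases ha' with h' | h' <;> tauto

lemma mem_act_pos {σ : Equiv.Perm (Fin n)} {ε : Fin n → Bool} {x : Cube n} {f : Fin n} :
    f ∈ (act σ ε x).pos ↔
      (ε (σ.symm f) = true ∧ σ.symm f ∈ x.pos) ∨ (¬ ε (σ.symm f) = true ∧ σ.symm f ∈ x.neg) := by
  simp only [act, Finset.mem_image, Finset.mem_union, Finset.mem_filter]
  constructor
  · rintro ⟨e, he, rfl⟩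
    simp only [Equiv.symm_apply_apply]
    tauto
  · intro h
    refine ⟨σ.symm f, ?_, Equiv.apply_symm_apply σ f⟩
    tauto

lemma act_anti (σ : Equiv.Perm (Fin n)) (ε : Fin n → Bool) (x : Cube n) :
    act σ ε (anti x) = anti (act σ ε x) := rfl

lemma mem_act_neg {σ : Equiv.Perm (Fin n)} {ε : Fin n → Bool} {x : Cube n} {f : Fin n} :
    f ∈ (act σ ε x).neg ↔
      (ε (σ.symm f) = true ∧ σ.symm f ∈ x.neg) ∨ (¬ ε (σ.symm f) = true ∧ σ.symm f ∈ x.pos) := by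
  have := @mem_act_pos n σ ε (anti x) f
  rw [act_anti] at this
  simpa using this

lemma act_mono {σ : Equiv.Perm (Fin n)} {ε : Fin n → Bool} {x y : Cube n} (h : x ≤ y) :
    act σ ε x ≤ act σ ε y := by
  constructor
  · intro f hf
    rw [mem_act_pos] at hf ⊢
    rcases hf with ⟨h1, h2⟩ | ⟨h1, h2⟩
    · exact Or.inl ⟨h1, h.1 h2⟩
    · exact Or.inr ⟨h1, h.2 h2⟩
  · intro f hf
    rw [mem_act_neg] at hf ⊢
    rcases hf with ⟨h1, h2⟩ | ⟨h1, h2⟩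
    · exact Or.inl ⟨h1, h.2 h2⟩
    · exact Or.inr ⟨h1, h.1 h2⟩

lemma act_act_symm (σ : Equiv.Perm (Fin n)) (ε : Fin n → Bool) (x : Cube n) :
    act σ.symm (fun e => ε (σ.symm e)) (act σ ε x) = x := by
  apply Cube.ext <;> ext f <;>
    by_cases hf : ε f = true <;>
      simp [mem_act_pos, mem_act_neg, hf]

lemma act_symm_act (σ : Equiv.Perm (Fin n)) (ε : Fin n → Bool) (x : Cube n) :
    act σ ε (act σ.symm (fun e => ε (σ.symm e)) x) = x := by
  apply Cube.ext <;> ext f <;>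
    by_cases hf : ε (σ.symm f) = true <;>
      simp [mem_act_pos, mem_act_neg, hf]

/-- the order isomorphism induced by a signed permutation -/
def actIso (σ : Equiv.Perm (Fin n)) (ε : Fin n → Bool) : Cube n ≃o Cube n where
  toFun := act σ ε
  invFun := act σ.symm (fun e => ε (σ.symm e))
  left_inv x := act_act_symm σ ε x
  right_inv x := act_symm_act σ ε x
  map_rel_iff' := by
    intro x y
    constructor
    · intro h
      replace h : act σ ε x ≤ act σ ε y := h
      have h2 := act_mono (σ := σ.symm) (ε := fun e => ε (σ.symm e)) h
      rwa [act_act_symm, act_act_symm] at h2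
    · exact act_mono

@[simp] lemma actIso_apply (σ : Equiv.Perm (Fin n)) (ε : Fin n → Bool) (x : Cube n) :
    actIso σ ε x = act σ ε x := rfl

lemma act_cc (σ : Equiv.Perm (Fin n)) (ε : Fin n → Bool) (e : Fin n) (b : Bool) :
    act σ ε (cc e b) = cc (σ e) (b == ε e) := by
  apply Cube.ext <;> cases b <;> by_cases h : ε e = true <;>
    simp [act, Finset.filter_singleton, h]

lemma act_isAut (σ : Equiv.Perm (Fin n)) (ε : Fin n → Bool) : IsAut (actIso σ ε) := by
  intro x y _
  apply Cube.ext <;> ext f <;>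
    by_cases hf : ε (σ.symm f) = true <;>
      simp only [actIso_apply, mem_act_pos, mem_act_neg, delta_pos', delta_neg',
        Finset.mem_union, Finset.mem_sdiff, mem_act_pos, mem_act_neg, hf] <;>
      tauto

lemma act_inj {σ σ' : Equiv.Perm (Fin n)} {ε ε' : Fin n → Bool}
    (h : ∀ x, act σ ε x = act σ' ε' x) : σ = σ' ∧ ε = ε' := by
  have key : ∀ e, σ e = σ' e ∧ ε e = ε' e := by
    intro e
    have h1 := h (cc e true)
    rw [act_cc, act_cc] at h1
    have h2 := cc_inj h1
    simpa using h2
  exact ⟨Equiv.ext fun e => (key e).1, funext fun e => (key e).2⟩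

/-! ### Classification of automorphisms -/

lemma isAut_anti {φ : Cube n ≃o Cube n} (hφ : IsAut φ) (x : Cube n) :
    φ (anti x) = anti (φ x) := by
  have h := hφ ⊤ x le_top
  rwa [delta_top, φ.map_top, delta_top] at h

lemma exists_act_of_isAut {φ : Cube n ≃o Cube n} (hφ : IsAut φ) :
    ∃ (σ : Equiv.Perm (Fin n)) (ε : Fin n → Bool), ∀ x, φ x = act σ ε x := by
  have hco : ∀ e : Fin n, ∃ pb : Fin n × Bool, φ (cc e true) = cc pb.1 pb.2 := by
    intro e
    have h := (φ.isCoatom_iff (cc e true)).2 (isCoatom_cc e true)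
    obtain ⟨f, b, hfb⟩ := isCoatom_iff_cc.1 h
    exact ⟨(f, b), hfb⟩
  choose pb hpb using hco
  set σ0 : Fin n → Fin n := fun e => (pb e).1 with hσ0
  set ε : Fin n → Bool := fun e => (pb e).2 with hε0
  have hcfalse : ∀ e, φ (cc e false) = cc (σ0 e) (!(ε e)) := by
    intro e
    have h1 : φ (anti (cc e true)) = anti (φ (cc e true)) := isAut_anti hφ _
    rw [hpb e] at h1
    simpa using h1
  have hval : ∀ e (b : Bool), φ (cc e b) = cc (σ0 e) (b == ε e) := by
    intro e b
    cases b
    · rw [hcfalse e]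
      congr 1
      cases hb : ε e <;> simp [hb]
    · rw [hpb e]
      congr 1
      cases hb : ε e <;> simp [hε0] at hb ⊢ <;> simp [hb]
  have hσinj : Function.Injective σ0 := by
    intro e e' h
    by_contra hne
    by_cases hee : ε e = ε e'
    · have : φ (cc e true) = φ (cc e' true) := by
        rw [hval, hval, h, hee]
      exact hne ((cc_inj (φ.injective this)).1)
    · have hb : ε e = !(ε e') := by
        cases h1 : ε e <;> cases h2 : ε e' <;> simp_all
      have : φ (cc e true) = φ (cc e' false) := by
        rw [hval, hval, h]
        congr 1
        cases h2 : ε e' <;> simp [hb, h2]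
      have h2 := φ.injective this
      have := (cc_inj h2).2
      simp at this
  have hbij := Finite.injective_iff_bijective.1 hσinj
  refine ⟨Equiv.ofBijective σ0 hbij, ε, fun x => ?_⟩
  set σ : Equiv.Perm (Fin n) := Equiv.ofBijective σ0 hbij with hσdef
  apply Cube.ext <;> ext f
  · set e := σ.symm f with hedef
    have hef : σ0 e = f := σ.apply_symm_apply f
    have h1 : f ∈ (φ x).pos ↔ x ≤ cc e (ε e) := by
      rw [← le_cc_true, ← φ.le_iff_le (y := cc e (ε e)), hval]
      simp [hef]
    rw [h1, mem_act_pos, le_cc, ← hedef]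
    by_cases hεe : ε e = true <;> simp [hεe]
  · set e := σ.symm f with hedef
    have hef : σ0 e = f := σ.apply_symm_apply f
    have h1 : f ∈ (φ x).neg ↔ x ≤ cc e (!(ε e)) := by
      rw [← le_cc_false, ← φ.le_iff_le (y := cc e (!(ε e))), hval]
      have : ((!ε e) == ε e) = false := by cases h : ε e <;> rfl
      simp [hef, this]
    rw [h1, mem_act_neg, le_cc, ← hedef]
    by_cases hεe : ε e = true <;> simp [hεe]

/-! ### Structure of MR-subalgebras -/

section Subalgebra
variable {A : Set (Cube n)}

lemma anti_mem (hA : IsMRSub A) {x : Cube n} (hx : x ∈ A) : anti x ∈ A :=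
  delta_top x ▸ hA.2.2.1 ⊤ hA.1 x hx le_top

lemma exists_coatom_above (hx : x ∈ A) (hxt : x ≠ ⊤) : ∃ a ∈ coAt A, x ≤ a := by
  classical
  have hfin : {b ∈ A | b ≠ ⊤ ∧ x ≤ b}.Finite := Set.toFinite _
  have hne : {b ∈ A | b ≠ ⊤ ∧ x ≤ b}.Nonempty := ⟨x, hx, hxt, le_rfl⟩
  obtain ⟨a, ⟨haA, hat, hxa⟩, hmax⟩ := hfin.exists_maximal hne
  refine ⟨a, ⟨haA, hat, fun b hb hbt hab => ?_⟩, hxa⟩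
  exact le_antisymm (hmax ⟨hb, hbt, hxa.trans hab⟩ hab) hab

lemma anti_mem_coAt (hA : IsMRSub A) {a : Cube n} (ha : a ∈ coAt A) : anti a ∈ coAt A := by
  obtain ⟨haA, hat, hmax⟩ := ha
  refine ⟨anti_mem hA haA, fun h => hat (anti_eq_top_iff.1 h), ?_⟩
  intro b hb hbt hab
  have h1 : a ≤ anti b := by simpa using anti_le_anti hab
  have h2 := hmax (anti b) (anti_mem hA hb) (fun h => hbt (anti_eq_top_iff.1 h)) h1
  rw [← h2, anti_anti]

lemma anti_ne_self_of_coAt {a : Cube n} (ha : a ∈ coAt A) : anti a ≠ a := by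
  intro h
  have h1 : a.neg = a.pos := congrArg Cube.pos h
  have h2 : a.pos = ∅ := by
    have := a.disj
    rw [h1] at this
    simpa using this
  exact ha.2.1 (eq_top_iff'.2 ⟨h2, h1.trans h2⟩)

lemma coAt_trichotomy (hA : IsMRSub A) {a b : Cube n} (ha : a ∈ coAt A) (hb : b ∈ coAt A) :
    a = b ∨ b = anti a ∨ Disjoint (a.pos ∪ a.neg) (b.pos ∪ b.neg) := by
  by_cases hsup : a ⊔ b = ⊤
  · have hpp : a.pos ∩ b.pos = ∅ := congrArg Cube.pos hsup
    have hnn : a.neg ∩ b.neg = ∅ := congrArg Cube.neg hsup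
    by_cases hmix : a.pos ∩ b.neg = ∅ ∧ a.neg ∩ b.pos = ∅
    · refine Or.inr (Or.inr ?_)
      rw [Finset.disjoint_left]
      intro f hf hf'
      rw [Finset.mem_union] at hf hf'
      have e1 := Finset.eq_empty_iff_forall_notMem.1 hpp f
      have e2 := Finset.eq_empty_iff_forall_notMem.1 hnn f
      have e3 := Finset.eq_empty_iff_forall_notMem.1 hmix.1 f
      have e4 := Finset.eq_empty_iff_forall_notMem.1 hmix.2 f
      simp only [Finset.mem_inter] at e1 e2 e3 e4
      tauto
    · refine Or.inr (Or.inl ?_)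
      set j := a ⊔ anti b with hj
      have hjA : j ∈ A := hA.2.1 a ha.1 (anti b) (anti_mem hA hb.1)
      have hjpos : j.pos = a.pos ∩ b.neg := rfl
      have hjneg : j.neg = a.neg ∩ b.pos := rfl
      have hjt : j ≠ ⊤ := by
        intro h
        exact hmix ⟨hjpos ▸ congrArg Cube.pos h, hjneg ▸ congrArg Cube.neg h⟩
      have hja : j = a := ha.2.2 j hjA hjt le_sup_left
      have hjb : anti j = b := by
        refine hb.2.2 (anti j) (anti_mem hA hjA) (fun h => hjt (anti_eq_top_iff.1 h)) ?_
        refine ⟨?_, ?_⟩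
        · show (anti j).pos ⊆ b.pos
          rw [anti_pos, hjneg]
          exact Finset.inter_subset_right
        · show (anti j).neg ⊆ b.neg
          rw [anti_neg, hjpos]
          exact Finset.inter_subset_right
      rw [← hjb, hja]
  · have hj : a ⊔ b ∈ A := hA.2.1 a ha.1 b hb.1
    have h1 : a ⊔ b = a := ha.2.2 _ hj hsup le_sup_left
    have h2 : a ⊔ b = b := hb.2.2 _ hj hsup le_sup_right
    exact Or.inl (h1 ▸ h2)

lemma support_covered (hA : IsMRSub A) :
    ∀ N (x : Cube n), x ∈ A → (x.pos ∪ x.neg).card ≤ N →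
      (∀ e ∈ x.pos, ∃ a ∈ coAt A, x ≤ a ∧ e ∈ a.pos) ∧
      (∀ e ∈ x.neg, ∃ a ∈ coAt A, x ≤ a ∧ e ∈ a.neg) := by
  intro N
  induction N with
  | zero =>
    intro x _ hcard
    have h : x.pos ∪ x.neg = ∅ := Finset.card_eq_zero.1 (Nat.le_zero.1 hcard)
    rw [Finset.union_eq_empty] at h
    constructor <;> intro e he <;> [rw [h.1] at he; rw [h.2] at he] <;> simp at he
  | succ N ih =>
    intro x hx hcard
    by_cases hxt : x = ⊤
    · subst hxt
      constructor <;> intro e he <;> simp at he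
    obtain ⟨a, haC, hxa⟩ := exists_coatom_above hx hxt
    have hdA : delta a x ∈ A := hA.2.2.1 a haC.1 x hx hxa
    set v := x ⊔ anti (delta a x) with hv
    have hvA : v ∈ A := hA.2.1 x hx _ (anti_mem hA hdA)
    have hd1 := Finset.disjoint_left.1 x.disj
    have hvpos : v.pos = x.pos \ a.pos := by
      ext f
      simp only [hv, sup_pos', anti_pos, delta_neg', Finset.mem_inter, Finset.mem_union,
        Finset.mem_sdiff]
      constructor
      · rintro ⟨h1, h2 | h2⟩
        · exact absurd (hxa.2 h2) (hd1 h1)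
        · exact ⟨h1, h2.2⟩
      · intro h
        exact ⟨h.1, Or.inr ⟨h.1, h.2⟩⟩
    have hvneg : v.neg = x.neg \ a.neg := by
      ext f
      simp only [hv, sup_neg', anti_neg, delta_pos', Finset.mem_inter, Finset.mem_union,
        Finset.mem_sdiff]
      constructor
      · rintro ⟨h1, h2 | h2⟩
        · exact absurd h1 (hd1 (hxa.1 h2))
        · exact ⟨h1, h2.2⟩
      · intro h
        exact ⟨h.1, Or.inr ⟨h.1, h.2⟩⟩
    have hsub : v.pos ∪ v.neg ⊂ x.pos ∪ x.neg := by
      rw [hvpos, hvneg]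
      constructor
      · exact Finset.union_subset_union (Finset.sdiff_subset) (Finset.sdiff_subset)
      · intro hss
        have hane : (a.pos ∪ a.neg).Nonempty := by
          rw [Finset.nonempty_iff_ne_empty]
          intro h
          rw [Finset.union_eq_empty] at h
          exact haC.2.1 (eq_top_iff'.2 h)
        obtain ⟨f, hf⟩ := hane
        rcases Finset.mem_union.1 hf with hf' | hf'
        · have hfx : f ∈ x.pos := hxa.1 hf'
          have := hss (Finset.mem_union_left _ hfx)
          rcases Finset.mem_union.1 this with h | h
          · exact (Finset.mem_sdiff.1 h).2 hf'
          · exact hd1 hfx (Finset.mem_sdiff.1 h).1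
        · have hfx : f ∈ x.neg := hxa.2 hf'
          have := hss (Finset.mem_union_right _ hfx)
          rcases Finset.mem_union.1 this with h | h
          · exact hd1 (Finset.mem_sdiff.1 h).1 hfx
          · exact (Finset.mem_sdiff.1 h).2 hf'
    have hvcard : (v.pos ∪ v.neg).card ≤ N := by
      have := Finset.card_lt_card hsub
      omega
    obtain ⟨ihp, ihn⟩ := ih v hvA hvcard
    constructor
    · intro e he
      by_cases hea : e ∈ a.pos
      · exact ⟨a, haC, hxa, hea⟩
      · have hev : e ∈ v.pos := by rw [hvpos]; exact Finset.mem_sdiff.2 ⟨he, hea⟩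
        obtain ⟨b, hbC, hvb, heb⟩ := ihp e hev
        refine ⟨b, hbC, ⟨?_, ?_⟩, heb⟩
        · exact fun f hf => (Finset.mem_sdiff.1 (hvpos ▸ hvb.1 hf)).1
        · exact fun f hf => (Finset.mem_sdiff.1 (hvneg ▸ hvb.2 hf)).1
    · intro e he
      by_cases hea : e ∈ a.neg
      · exact ⟨a, haC, hxa, hea⟩
      · have hev : e ∈ v.neg := by rw [hvneg]; exact Finset.mem_sdiff.2 ⟨he, hea⟩
        obtain ⟨b, hbC, hvb, heb⟩ := ihn e hev
        refine ⟨b, hbC, ⟨?_, ?_⟩, heb⟩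
        · exact fun f hf => (Finset.mem_sdiff.1 (hvpos ▸ hvb.1 hf)).1
        · exact fun f hf => (Finset.mem_sdiff.1 (hvneg ▸ hvb.2 hf)).1

lemma act_card (σ : Equiv.Perm (Fin n)) (ε : Fin n → Bool) (x : Cube n) :
    (act σ ε x).pos.card + (act σ ε x).neg.card = x.pos.card + x.neg.card := by
  have hd := Finset.disjoint_left.1 x.disj
  have hp : (act σ ε x).pos.card =
      (x.pos.filter (fun e => ε e = true)).card +
        (x.neg.filter (fun e => ¬ ε e = true)).card := by
    rw [show (act σ ε x).pos =
      (x.pos.filter (fun e => ε e = true) ∪ x.neg.filter (fun e => ¬ ε e = true)).image σ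
      from rfl, Finset.card_image_of_injective _ σ.injective, Finset.card_union_of_disjoint]
    rw [Finset.disjoint_left]
    intro f hf hf'
    exact hd (Finset.mem_filter.1 hf).1 (Finset.mem_filter.1 hf').1
  have hn : (act σ ε x).neg.card =
      (x.neg.filter (fun e => ε e = true)).card +
        (x.pos.filter (fun e => ¬ ε e = true)).card := by
    rw [show (act σ ε x).neg =
      (x.neg.filter (fun e => ε e = true) ∪ x.pos.filter (fun e => ¬ ε e = true)).image σ
      from rfl, Finset.card_image_of_injective _ σ.injective, Finset.card_union_of_disjoint]
    rw [Finset.disjoint_left]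
    intro f hf hf'
    exact hd (Finset.mem_filter.1 hf').1 (Finset.mem_filter.1 hf).1
  have e1 : (x.pos.filter (fun e => ε e = true)).card +
      (x.pos.filter (fun e => ¬ ε e = true)).card = x.pos.card := by
    simpa using Finset.card_filter_add_card_filter_not
      (s := x.pos) (p := fun e => ε e = true)
  have e2 : (x.neg.filter (fun e => ε e = true)).card +
      (x.neg.filter (fun e => ¬ ε e = true)).card = x.neg.card := by
    simpa using Finset.card_filter_add_card_filter_not
      (s := x.neg) (p := fun e => ε e = true)
  omega

/-- an order automorphism fixing all coatoms of `A` fixes `A` pointwise -/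
lemma act_fixes_of_fixes_coAt (hA : IsMRSub A) {σ : Equiv.Perm (Fin n)} {ε : Fin n → Bool}
    (hfix : ∀ a ∈ coAt A, act σ ε a = a) {x : Cube n} (hx : x ∈ A) : act σ ε x = x := by
  by_cases hxt : x = ⊤
  · subst hxt
    apply Cube.ext <;> simp [act]
  have hcov := support_covered hA (x.pos ∪ x.neg).card x hx le_rfl
  have hlepos : x.pos ⊆ (act σ ε x).pos := by
    intro e he
    obtain ⟨a, haC, hxa, hea⟩ := hcov.1 e he
    have h1 : act σ ε x ≤ act σ ε a := act_mono hxa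
    rw [hfix a haC] at h1
    exact h1.1 hea
  have hleneg : x.neg ⊆ (act σ ε x).neg := by
    intro e he
    obtain ⟨a, haC, hxa, hea⟩ := hcov.2 e he
    have h1 : act σ ε x ≤ act σ ε a := act_mono hxa
    rw [hfix a haC] at h1
    exact h1.2 hea
  have hcards := act_card σ ε x
  have h1 : x.pos.card ≤ (act σ ε x).pos.card := Finset.card_le_card hlepos
  have h2 : x.neg.card ≤ (act σ ε x).neg.card := Finset.card_le_card hleneg
  exact Cube.ext
    (Finset.eq_of_subset_of_card_le hlepos (by omega)).symm
    (Finset.eq_of_subset_of_card_le hleneg (by omega)).symm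

end Subalgebra

/-! ### Coatoms above and representatives -/

lemma coatomsAbove_eq (a : Cube n) :
    coatomsAbove a =
      ↑(a.pos.image (fun e => cc e true) ∪ a.neg.image (fun e => cc e false)) := by
  ext c
  simp only [coatomsAbove, Set.mem_setOf_eq, Finset.coe_union, Set.mem_union, Finset.coe_image,
    Set.mem_image, Finset.mem_coe]
  constructor
  · rintro ⟨h1, h2⟩
    obtain ⟨e, b, rfl⟩ := corank_eq_one_iff.1 h1
    cases b
    · exact Or.inr ⟨e, le_cc_false.1 h2, rfl⟩
    · exact Or.inl ⟨e, le_cc_true.1 h2, rfl⟩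
  · rintro (⟨e, he, rfl⟩ | ⟨e, he, rfl⟩)
    · exact ⟨corank_eq_one_iff.2 ⟨e, true, rfl⟩, le_cc_true.2 he⟩
    · exact ⟨corank_eq_one_iff.2 ⟨e, false, rfl⟩, le_cc_false.2 he⟩

lemma coatomsAbove_ncard (a : Cube n) :
    (coatomsAbove a).ncard = (a.pos ∪ a.neg).card := by
  classical
  rw [coatomsAbove_eq, Set.ncard_coe_finset, Finset.card_union_of_disjoint,
    Finset.card_image_of_injective _ (fun e f h => (cc_inj h).1),
    Finset.card_image_of_injective _ (fun e f h => (cc_inj h).1),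
    Finset.card_union_of_disjoint a.disj]
  rw [Finset.disjoint_left]
  rintro c hc hc'
  obtain ⟨e, -, rfl⟩ := Finset.mem_image.1 hc
  obtain ⟨f, -, hf⟩ := Finset.mem_image.1 hc'
  exact absurd (cc_inj hf).2 (by simp)

lemma exists_reps {α : Type*} [DecidableEq α] :
    ∀ (N : ℕ) (s : Finset α) (f : α → α), s.card ≤ N → (∀ x ∈ s, f x ∈ s) →
      (∀ x ∈ s, f (f x) = x) → (∀ x ∈ s, f x ≠ x) →
      ∃ r : Finset α, r ⊆ s ∧ Disjoint r (r.image f) ∧ r ∪ r.image f = s := by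
  intro N
  induction N with
  | zero =>
    intro s f hcard _ _ _
    have : s = ∅ := Finset.card_eq_zero.1 (Nat.le_zero.1 hcard)
    subst this
    exact ⟨∅, by simp⟩
  | succ N ih =>
    intro s f hcard hcl hinv hfix
    rcases s.eq_empty_or_nonempty with rfl | ⟨a, ha⟩
    · exact ⟨∅, by simp⟩
    set s' := s \ {a, f a} with hs'
    have hs'sub : s' ⊆ s := Finset.sdiff_subset
    have hmem : ∀ x, x ∈ s' ↔ x ∈ s ∧ x ≠ a ∧ x ≠ f a := by
      intro x
      simp [hs', Finset.mem_sdiff, not_or]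
    have hcl' : ∀ x ∈ s', f x ∈ s' := by
      intro x hx
      rw [hmem] at hx ⊢
      refine ⟨hcl x hx.1, fun h => hx.2.2 ?_, fun h => hx.2.1 ?_⟩
      · rw [← h]
        exact (hinv x hx.1).symm ▸ congrArg f rfl
      · have := congrArg f h
        rwa [hinv x hx.1, hinv a ha] at this
    have hcard' : s'.card ≤ N := by
      have h1 : s'.card < s.card := Finset.card_lt_card (by
        constructor
        · exact hs'sub
        · intro hss
          have := (hmem a).1 (hss ha)
          exact this.2.1 rfl)
      omega
    obtain ⟨r, hrsub, hrdisj, hrunion⟩ := ih s' f hcard' hcl'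
      (fun x hx => hinv x (hs'sub hx)) (fun x hx => hfix x (hs'sub hx))
    refine ⟨insert a r, ?_, ?_, ?_⟩
    · intro x hx
      rcases Finset.mem_insert.1 hx with rfl | hx
      · exact ha
      · exact hs'sub (hrsub hx)
    · rw [Finset.image_insert, Finset.disjoint_left]
      intro x hx hx'
      rcases Finset.mem_insert.1 hx with rfl | hx
      · rcases Finset.mem_insert.1 hx' with h | h
        · exact hfix x (by assumption) h.symm
        · obtain ⟨y, hy, hyx⟩ := Finset.mem_image.1 h
          have : x ∈ s' := hrunion ▸ Finset.mem_union_right _ (hyx ▸ Finset.mem_image_of_mem f hy)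
          exact ((hmem x).1 this).2.1 rfl
      · rcases Finset.mem_insert.1 hx' with h | h
        · subst h
          have hx'' : f a ∈ s' := hrsub hx
          exact ((hmem (f a)).1 hx'').2.2 rfl
        · exact Finset.disjoint_left.1 hrdisj hx h
    · rw [Finset.image_insert]
      ext x
      simp only [Finset.mem_union, Finset.mem_insert]
      constructor
      · rintro ((rfl | hx) | (rfl | hx))
        · exact ha
        · exact hs'sub (hrsub hx)
        · exact hcl a ha
        · exact hs'sub (hrunion ▸ Finset.mem_union_right _ hx)
      · intro hx
        by_cases h1 : x = a
        · exact Or.inl (Or.inl h1)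
        by_cases h2 : x = f a
        · exact Or.inr (Or.inl h2)
        have : x ∈ s' := (hmem x).2 ⟨hx, h1, h2⟩
        rw [← hrunion] at this
        rcases Finset.mem_union.1 this with h | h
        · exact Or.inl (Or.inr h)
        · exact Or.inr (Or.inr h)

/-! ### The main counting theorem -/
set_option maxHeartbeats 2000000 in

lemma freeze_count (hn : 1 ≤ n) (A : Set (Cube n)) (hA : IsMRSub A)
    (t : ℕ → ℕ) (ht : ∀ i, 2 * t i = (typeSet A i).ncard)
    (r : ℕ) (hr : r = ∑ i ∈ Finset.Icc 1 n, i * t i) :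
    ({φ | φ ∈ AutSet n ∧ ∀ x ∈ A, φ x = x} : Set (Cube n ≃o Cube n)).ncard =
      2 ^ (n - r) * Nat.factorial (n - r) *
        ∏ i ∈ Finset.Icc 1 n, Nat.factorial i ^ t i := by
  classical
  -- representatives of coatom pairs
  have hCAfin : (coAt A).Finite := Set.toFinite _
  set CAf : Finset (Cube n) := hCAfin.toFinset with hCAfdef
  have hmemCAf : ∀ a, a ∈ CAf ↔ a ∈ coAt A := fun a => hCAfin.mem_toFinset
  obtain ⟨R, hRsub, hRdisj, hRuni⟩ := exists_reps CAf.card CAf anti le_rfl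
    (fun x hx => (hmemCAf _).2 (anti_mem_coAt hA ((hmemCAf _).1 hx)))
    (fun x _ => anti_anti x)
    (fun x hx => anti_ne_self_of_coAt ((hmemCAf _).1 hx))
  have hRco : ∀ a ∈ R, a ∈ coAt A := fun a ha => (hmemCAf _).1 (hRsub ha)
  have htop_notR : (⊤ : Cube n) ∉ R := fun h => ((hRco ⊤ h).2.1 rfl)
  have hdisjsupp : ∀ a ∈ R, ∀ b ∈ R, a ≠ b →
      Disjoint (a.pos ∪ a.neg) (b.pos ∪ b.neg) := by
    intro a ha b hb hab
    rcases coAt_trichotomy hA (hRco a ha) (hRco b hb) with h | h | h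
    · exact absurd h hab
    · exact absurd (h ▸ Finset.mem_image_of_mem anti ha)
        (fun hh => Finset.disjoint_left.1 hRdisj hb hh)
    · exact h
  set T : Finset (Fin n) := R.biUnion (fun a => a.pos ∪ a.neg) with hTdef
  -- the block function
  set blk : Fin n → Cube n :=
    fun e => if h : ∃ a ∈ R, e ∈ a.pos ∪ a.neg then h.choose else ⊤ with hblkdef
  have hblk_mem : ∀ a ∈ R, ∀ e ∈ a.pos ∪ a.neg, blk e = a := by
    intro a ha e he
    have hex : ∃ a ∈ R, e ∈ a.pos ∪ a.neg := ⟨a, ha, he⟩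
    have h1 : blk e = hex.choose := dif_pos hex
    obtain ⟨hc1, hc2⟩ := hex.choose_spec
    rw [h1]
    by_contra hne
    exact Finset.disjoint_left.1 (hdisjsupp _ hc1 a ha hne) hc2 he
  have hblk_top : ∀ e, e ∉ T → blk e = ⊤ := by
    intro e he
    have : ¬ ∃ a ∈ R, e ∈ a.pos ∪ a.neg := by
      rintro ⟨a, ha, hea⟩
      exact he (Finset.mem_biUnion.2 ⟨a, ha, hea⟩)
    exact dif_neg this
  have hblk_iff : ∀ a ∈ R, ∀ e, blk e = a ↔ e ∈ a.pos ∪ a.neg := by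
    intro a ha e
    refine ⟨fun h => ?_, hblk_mem a ha e⟩
    by_cases heT : ∃ b ∈ R, e ∈ b.pos ∪ b.neg
    · obtain ⟨b, hb, heb⟩ := heT
      rw [hblk_mem b hb e heb] at h
      exact h ▸ heb
    · have h2 : blk e = ⊤ := dif_neg heT
      rw [h2] at h
      exact absurd ha (by rw [← h]; exact htop_notR)
  have hblk_top_iff : ∀ e, blk e = ⊤ ↔ e ∉ T := by
    intro e
    refine ⟨fun h heT => ?_, hblk_top e⟩
    obtain ⟨a, ha, hea⟩ := Finset.mem_biUnion.1 heT
    rw [hblk_mem a ha e hea] at h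
    exact htop_notR (h ▸ ha)
  have hmemT : ∀ e ∈ T, ∃ a ∈ R, e ∈ a.pos ∪ a.neg := fun e he => Finset.mem_biUnion.1 he
  -- counting `t`
  have hanti_inj : Function.Injective (anti : Cube n → Cube n) :=
    Function.Involutive.injective anti_anti
  have htcount : ∀ i, t i = (R.filter (fun a => (a.pos ∪ a.neg).card = i)).card := by
    intro i
    have hts : typeSet A i = ↑(CAf.filter (fun a => (a.pos ∪ a.neg).card = i)) := by
      ext a
      simp only [typeSet, Set.mem_setOf_eq, Finset.coe_filter, hmemCAf]
      constructor
      · rintro ⟨h1, h2⟩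
        refine ⟨h1, ?_⟩
        rw [← coatomsAbove_ncard]
        exact h2
      · rintro ⟨h1, h2⟩
        refine ⟨h1, ?_⟩
        rw [coatomsAbove_ncard]
        exact h2
    have himg : (R.image anti).filter (fun a => (a.pos ∪ a.neg).card = i) =
        (R.filter (fun a => (a.pos ∪ a.neg).card = i)).image anti := by
      ext b
      simp only [Finset.mem_filter, Finset.mem_image]
      constructor
      · rintro ⟨⟨a, ha, rfl⟩, hP⟩
        refine ⟨a, ⟨ha, ?_⟩, rfl⟩
        rwa [anti_pos, anti_neg, Finset.union_comm] at hP
      · rintro ⟨a, ⟨ha, hP⟩, rfl⟩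
        refine ⟨⟨a, ha, rfl⟩, ?_⟩
        rwa [anti_pos, anti_neg, Finset.union_comm]
    have hcard2 : (CAf.filter (fun a => (a.pos ∪ a.neg).card = i)).card =
        2 * (R.filter (fun a => (a.pos ∪ a.neg).card = i)).card := by
      rw [← hRuni, Finset.filter_union, himg, Finset.card_union_of_disjoint,
        Finset.card_image_of_injective _ hanti_inj]
      · ring
      · exact Finset.disjoint_of_subset_left (Finset.filter_subset _ _)
          (Finset.disjoint_of_subset_right (Finset.image_subset_image (Finset.filter_subset _ _))
            hRdisj)
    have hti := ht i
    rw [hts, Set.ncard_coe_finset, hcard2] at hti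
    omega
  have hsupp_icc : ∀ a ∈ R, (a.pos ∪ a.neg).card ∈ Finset.Icc 1 n := by
    intro a ha
    rw [Finset.mem_Icc]
    constructor
    · rw [Nat.one_le_iff_ne_zero]
      intro h
      rw [Finset.card_eq_zero, Finset.union_eq_empty] at h
      exact (hRco a ha).2.1 (eq_top_iff'.2 h)
    · simpa using Finset.card_le_univ (a.pos ∪ a.neg)
  have hTr : T.card = r := by
    rw [hTdef, Finset.card_biUnion hdisjsupp, hr,
      ← Finset.sum_fiberwise_of_maps_to hsupp_icc (fun a => (a.pos ∪ a.neg).card)]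
    apply Finset.sum_congr rfl
    intro i _
    calc (∑ a ∈ R.filter (fun a => (a.pos ∪ a.neg).card = i), (a.pos ∪ a.neg).card)
        = ∑ _a ∈ R.filter (fun a => (a.pos ∪ a.neg).card = i), i :=
          Finset.sum_congr rfl (fun a ha => (Finset.mem_filter.1 ha).2)
      _ = (R.filter (fun a => (a.pos ∪ a.neg).card = i)).card * i := by
          rw [Finset.sum_const, smul_eq_mul]
      _ = i * t i := by rw [htcount i]; ring
  have hrn : r ≤ n := by
    rw [← hTr]
    simpa using Finset.card_le_univ T
  -- the freezing set and the stabilizer of signed permutations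
  set S : Set (Cube n ≃o Cube n) := {φ | φ ∈ AutSet n ∧ ∀ x ∈ A, φ x = x} with hSdef
  set G : Set (Equiv.Perm (Fin n) × (Fin n → Bool)) :=
    {g | ∀ a ∈ coAt A, act g.1 g.2 a = a} with hGdef
  have hSG : Nat.card ↥S = Nat.card ↥G := by
    symm
    apply Nat.card_eq_of_bijective
      (f := fun g : ↥G => (⟨actIso g.1.1 g.1.2,
        act_isAut g.1.1 g.1.2,
        fun x hx => act_fixes_of_fixes_coAt hA g.2 hx⟩ : ↥S))
    constructor
    · intro g1 g2 h
      have h1 : actIso g1.1.1 g1.1.2 = actIso g2.1.1 g2.1.2 := congrArg Subtype.val h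
      have h2 : ∀ x, act g1.1.1 g1.1.2 x = act g2.1.1 g2.1.2 x :=
        fun x => DFunLike.congr_fun h1 x
      obtain ⟨hσ, hε⟩ := act_inj h2
      exact Subtype.ext (Prod.ext hσ hε)
    · rintro ⟨φ, hφ1, hφ2⟩
      obtain ⟨σ, ε, hact⟩ := exists_act_of_isAut hφ1
      refine ⟨⟨(σ, ε), fun a ha => ?_⟩, ?_⟩
      · rw [← hact a]
        exact hφ2 a ha.1
      · apply Subtype.ext
        exact DFunLike.ext _ _ (fun x => (hact x).symm)
  set W := {σ : Equiv.Perm (Fin n) // blk ∘ σ = blk} × ({e : Fin n // e ∉ T} → Bool) with hWdef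
  have hiffp : ∀ (σ : Equiv.Perm (Fin n)) (ε : Fin n → Bool) (a : Cube n), act σ ε a = a →
      ∀ e, (σ e ∈ a.pos ↔ ((ε e = true ∧ e ∈ a.pos) ∨ (¬ ε e = true ∧ e ∈ a.neg))) := by
    intro σ ε a hfa e
    conv_lhs => rw [← hfa]
    rw [mem_act_pos]
    simp
  have hiffn : ∀ (σ : Equiv.Perm (Fin n)) (ε : Fin n → Bool) (a : Cube n), act σ ε a = a →
      ∀ e, (σ e ∈ a.neg ↔ ((ε e = true ∧ e ∈ a.neg) ∨ (¬ ε e = true ∧ e ∈ a.pos))) := by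
    intro σ ε a hfa e
    conv_lhs => rw [← hfa]
    rw [mem_act_neg]
    simp
  have hP1 : ∀ (σ : Equiv.Perm (Fin n)) (ε : Fin n → Bool),
      (∀ a ∈ coAt A, act σ ε a = a) → ∀ e ∈ T,
      blk (σ e) = blk e ∧
        ε e = (decide (e ∈ (blk e).pos) == decide (σ e ∈ (blk e).pos)) := by
    intro σ ε hg e heT
    obtain ⟨a, ha, hea⟩ := hmemT e heT
    have hba : blk e = a := hblk_mem a ha e hea
    have hfa : act σ ε a = a := hg a (hRco a ha)
    have hp := hiffp σ ε a hfa e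
    have hn := hiffn σ ε a hfa e
    have hd := Finset.disjoint_left.1 a.disj
    rcases Finset.mem_union.1 hea with he | he
    · have hen : e ∉ a.neg := hd he
      have h1 : σ e ∈ a.pos ↔ ε e = true := by rw [hp]; tauto
      have h2 : σ e ∈ a.neg ↔ ¬ ε e = true := by rw [hn]; tauto
      have hσsupp : σ e ∈ a.pos ∪ a.neg := by
        by_cases hε : ε e = true
        · exact Finset.mem_union_left _ (h1.2 hε)
        · exact Finset.mem_union_right _ (h2.2 hε)
      refine ⟨by rw [hblk_mem a ha _ hσsupp, hba], ?_⟩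
      rw [hba]
      by_cases hε : ε e = true
      · have hσp : σ e ∈ a.pos := h1.2 hε
        rw [hε]
        simp [he, hσp]
      · have hσp : σ e ∉ a.pos := fun hh => hε (h1.1 hh)
        rw [Bool.not_eq_true] at hε
        rw [hε]
        simp [he, hσp]
    · have hen : e ∉ a.pos := fun hh => hd hh he
      have h1 : σ e ∈ a.pos ↔ ¬ ε e = true := by rw [hp]; tauto
      have h2 : σ e ∈ a.neg ↔ ε e = true := by rw [hn]; tauto
      have hσsupp : σ e ∈ a.pos ∪ a.neg := by
        by_cases hε : ε e = true
        · exact Finset.mem_union_right _ (h2.2 hε)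
        · exact Finset.mem_union_left _ (h1.2 hε)
      refine ⟨by rw [hblk_mem a ha _ hσsupp, hba], ?_⟩
      rw [hba]
      by_cases hε : ε e = true
      · have hσp : σ e ∉ a.pos := fun hh => (h1.1 hh) hε
        rw [hε]
        simp [hen, hσp]
      · have hσp : σ e ∈ a.pos := h1.2 hε
        rw [Bool.not_eq_true] at hε
        rw [hε]
        simp [hen, hσp]
  have hP2 : ∀ (σ : Equiv.Perm (Fin n)) (ε : Fin n → Bool),
      (∀ a ∈ coAt A, act σ ε a = a) → ∀ e, e ∉ T → σ e ∉ T := by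
    intro σ ε hg e heT hσT
    obtain ⟨a, ha, hσa⟩ := hmemT _ hσT
    have hfa := hg a (hRco a ha)
    have hcontra : e ∈ a.pos ∪ a.neg := by
      rcases Finset.mem_union.1 hσa with h | h
      · rcases (hiffp σ ε a hfa e).1 h with ⟨_, h2⟩ | ⟨_, h2⟩
        · exact Finset.mem_union_left _ h2
        · exact Finset.mem_union_right _ h2
      · rcases (hiffn σ ε a hfa e).1 h with ⟨_, h2⟩ | ⟨_, h2⟩
        · exact Finset.mem_union_right _ h2
        · exact Finset.mem_union_left _ h2
    exact heT (Finset.mem_biUnion.2 ⟨a, ha, hcontra⟩)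
  have hP3 : ∀ (σ : Equiv.Perm (Fin n)), (∀ e, blk (σ e) = blk e) →
      ∀ (ε : Fin n → Bool),
      (∀ e ∈ T, ε e = (decide (e ∈ (blk e).pos) == decide (σ e ∈ (blk e).pos))) →
      ∀ a ∈ coAt A, act σ ε a = a := by
    intro σ hσ ε hε a haco
    have hmain : ∀ b ∈ R, act σ ε b = b := by
      intro b hb
      have hbmem : ∀ e, e ∈ b.pos ∪ b.neg ↔ blk e = b := fun e => (hblk_iff b hb e).symm
      have hd := Finset.disjoint_left.1 b.disj
      have hkey : ∀ f : Fin n,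
          (ε (σ.symm f) = (decide (σ.symm f ∈ b.pos) == decide (f ∈ b.pos)) ∧
              (σ.symm f ∈ b.pos ∪ b.neg) ∧ (f ∈ b.pos ∪ b.neg)) ∨
          ((σ.symm f ∉ b.pos ∪ b.neg) ∧ (f ∉ b.pos ∪ b.neg)) := by
        intro f
        have hfe : σ (σ.symm f) = f := σ.apply_symm_apply f
        have hblkfe : blk f = blk (σ.symm f) := by
          conv_lhs => rw [← hfe]
          exact hσ (σ.symm f)
        by_cases hesupp : σ.symm f ∈ b.pos ∪ b.neg
        · have hfsupp : f ∈ b.pos ∪ b.neg := by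
            rw [hbmem, hblkfe, ← hbmem]
            exact hesupp
          have heT : σ.symm f ∈ T := Finset.mem_biUnion.2 ⟨b, hb, hesupp⟩
          refine Or.inl ⟨?_, hesupp, hfsupp⟩
          rw [hε _ heT, (hbmem _).1 hesupp, hfe]
        · refine Or.inr ⟨hesupp, fun hh => hesupp ?_⟩
          rw [hbmem, ← hblkfe, ← hbmem]
          exact hh
      apply Cube.ext
      · ext f
        rw [mem_act_pos]
        rcases hkey f with ⟨hεe, hesupp, hfsupp⟩ | ⟨hesupp, hfsupp⟩
        · have hfn : f ∈ b.neg ↔ ¬ f ∈ b.pos :=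
            ⟨fun h hh => hd hh h, fun h => (Finset.mem_union.1 hfsupp).resolve_left h⟩
          rcases Finset.mem_union.1 hesupp with he | he
          · have hen : σ.symm f ∉ b.neg := hd he
            by_cases hf : f ∈ b.pos
            · have hεT : ε (σ.symm f) = true := by rw [hεe]; simp [he, hf]
              simp [hf, hεT, he, hen]
            · have hεT : ε (σ.symm f) = false := by rw [hεe]; simp [he, hf]
              simp [hf, hεT, he, hen]
          · have hen : σ.symm f ∉ b.pos := fun hh => hd hh he
            by_cases hf : f ∈ b.pos
            · have hεT : ε (σ.symm f) = false := by rw [hεe]; simp [hen, hf]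
              simp [hf, hεT, he, hen]
            · have hεT : ε (σ.symm f) = true := by rw [hεe]; simp [hen, hf]
              simp [hf, hεT, hfn, he, hen]
        · have h1 : f ∉ b.pos := fun hh => hfsupp (Finset.mem_union_left _ hh)
          have h2 : σ.symm f ∉ b.pos := fun hh => hesupp (Finset.mem_union_left _ hh)
          have h3 : σ.symm f ∉ b.neg := fun hh => hesupp (Finset.mem_union_right _ hh)
          simp [h1, h2, h3]
      · ext f
        rw [mem_act_neg]
        rcases hkey f with ⟨hεe, hesupp, hfsupp⟩ | ⟨hesupp, hfsupp⟩
        · have hfn : f ∈ b.neg ↔ ¬ f ∈ b.pos :=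
            ⟨fun h hh => hd hh h, fun h => (Finset.mem_union.1 hfsupp).resolve_left h⟩
          rcases Finset.mem_union.1 hesupp with he | he
          · have hen : σ.symm f ∉ b.neg := hd he
            by_cases hf : f ∈ b.pos
            · have hεT : ε (σ.symm f) = true := by rw [hεe]; simp [he, hf]
              have hfn' : f ∉ b.neg := hd hf
              simp [hfn', hεT, he, hen]
            · have hεT : ε (σ.symm f) = false := by rw [hεe]; simp [he, hf]
              simp [hfn, hf, hεT, he, hen]
          · have hen : σ.symm f ∉ b.pos := fun hh => hd hh he
            by_cases hf : f ∈ b.pos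
            · have hεT : ε (σ.symm f) = false := by rw [hεe]; simp [hen, hf]
              have hfn' : f ∉ b.neg := hd hf
              simp [hfn', hεT, he, hen]
            · have hεT : ε (σ.symm f) = true := by rw [hεe]; simp [hen, hf]
              simp [hfn, hf, hεT, he, hen]
        · have h1 : f ∉ b.neg := fun hh => hfsupp (Finset.mem_union_right _ hh)
          have h2 : σ.symm f ∉ b.pos := fun hh => hesupp (Finset.mem_union_left _ hh)
          have h3 : σ.symm f ∉ b.neg := fun hh => hesupp (Finset.mem_union_right _ hh)
          simp [h1, h2, h3]
    have haCAf : a ∈ R ∪ R.image anti := by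
      rw [hRuni]
      exact (hmemCAf a).2 haco
    rcases Finset.mem_union.1 haCAf with h | h
    · exact hmain a h
    · obtain ⟨b, hb, rfl⟩ := Finset.mem_image.1 h
      rw [act_anti, hmain b hb]
  have hGW : Nat.card ↥G = Nat.card W := by
    apply Nat.card_congr
    refine
      { toFun := fun g => ⟨⟨g.1.1, funext (fun e => ?_)⟩, fun e => g.1.2 e.1⟩
        invFun := fun w => ⟨(w.1.1, fun e =>
          if h : e ∈ T then (decide (e ∈ (blk e).pos) == decide (w.1.1 e ∈ (blk e).pos))
          else w.2 ⟨e, h⟩), ?_⟩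
        left_inv := ?_
        right_inv := ?_ }
    · show blk (g.1.1 e) = blk e
      by_cases heT : e ∈ T
      · exact (hP1 g.1.1 g.1.2 g.2 e heT).1
      · rw [hblk_top _ (hP2 g.1.1 g.1.2 g.2 e heT), hblk_top e heT]
    · show (w.1.1, _) ∈ G
      refine hP3 w.1.1 (fun e => congrFun w.1.2 e) _ (fun e heT => ?_)
      show (if h : e ∈ T then _ else _) = _
      rw [dif_pos heT]
    · rintro ⟨⟨σ, ε⟩, hg⟩
      apply Subtype.ext
      refine Prod.ext rfl ?_
      funext e
      by_cases heT : e ∈ T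
      · show (if h : e ∈ T then _ else _) = ε e
        rw [dif_pos heT]
        exact ((hP1 σ ε hg e heT).2).symm
      · show (if h : e ∈ T then _ else _) = ε e
        rw [dif_neg heT]
    · rintro ⟨⟨σ, hσ⟩, δ⟩
      refine Prod.ext (Subtype.ext rfl) ?_
      funext e
      show (if h : e.1 ∈ T then _ else _) = δ e
      rw [dif_neg e.2]
  -- fibre cardinalities
  have hfib_top : Fintype.card {e // blk e = (⊤ : Cube n)} = n - r := by
    rw [Fintype.card_subtype]
    have heq : Finset.univ.filter (fun e => blk e = ⊤) = Tᶜ := by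
      ext e
      simp [Finset.mem_filter, Finset.mem_compl, hblk_top_iff e]
    rw [heq, Finset.card_compl, hTr]
    simp
  have hfib_R : ∀ a ∈ R, Fintype.card {e // blk e = a} = (a.pos ∪ a.neg).card := by
    intro a ha
    rw [Fintype.card_subtype]
    congr 1
    ext e
    simp [Finset.mem_filter, hblk_iff a ha e]
  have hfib_zero : ∀ c : Cube n, c ∉ insert ⊤ R → Fintype.card {e // blk e = c} = 0 := by
    intro c hc
    rw [Fintype.card_eq_zero_iff]
    refine ⟨fun ⟨e, he⟩ => ?_⟩
    by_cases heT : e ∈ T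
    · obtain ⟨a, ha, hea⟩ := hmemT e heT
      rw [hblk_mem a ha e hea] at he
      exact hc (he ▸ Finset.mem_insert_of_mem ha)
    · rw [hblk_top e heT] at he
      exact hc (he ▸ Finset.mem_insert_self _ _)
  -- the product formula
  have hprod : ∏ c : Cube n, (Fintype.card {e // blk e = c}).factorial =
      Nat.factorial (n - r) * ∏ i ∈ Finset.Icc 1 n, Nat.factorial i ^ t i := by
    have h1 : ∏ c : Cube n, (Fintype.card {e // blk e = c}).factorial =
        ∏ c ∈ insert ⊤ R, (Fintype.card {e // blk e = c}).factorial := by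
      symm
      apply Finset.prod_subset (Finset.subset_univ _)
      intro c _ hc
      rw [hfib_zero c hc]
      rfl
    rw [h1, Finset.prod_insert htop_notR, hfib_top]
    congr 1
    rw [Finset.prod_congr rfl (fun a ha => by rw [hfib_R a ha]),
      ← Finset.prod_fiberwise_of_maps_to hsupp_icc
        (fun a => ((a.pos ∪ a.neg).card).factorial)]
    apply Finset.prod_congr rfl
    intro i _
    calc (∏ a ∈ R.filter (fun a => (a.pos ∪ a.neg).card = i), ((a.pos ∪ a.neg).card).factorial)
        = ∏ _a ∈ R.filter (fun a => (a.pos ∪ a.neg).card = i), Nat.factorial i :=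
          Finset.prod_congr rfl (fun a ha => by rw [(Finset.mem_filter.1 ha).2])
      _ = Nat.factorial i ^ t i := by rw [Finset.prod_const, htcount i]
  -- the cardinality of W
  have hW : Nat.card W =
      (Nat.factorial (n - r) * ∏ i ∈ Finset.Icc 1 n, Nat.factorial i ^ t i) * 2 ^ (n - r) := by
    rw [hWdef, Nat.card_prod, Nat.card_eq_fintype_card, Nat.card_eq_fintype_card,
      DomMulAct.stabilizer_card blk, hprod]
    congr 1
    rw [Fintype.card_fun]
    congr 1
    · rw [Fintype.card_subtype]
      have heq : Finset.univ.filter (fun e => e ∉ T) = Tᶜ := by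
        ext e; simp
      rw [heq, Finset.card_compl, hTr]
      simp
  -- conclusion
  have h1 : ({φ | φ ∈ AutSet n ∧ ∀ x ∈ A, φ x = x} :
      Set (Cube n ≃o Cube n)).ncard = Nat.card ↥S := (Nat.card_coe_set_eq _).symm
  rw [h1, hSG, hGW, hW]
  ring

end Cube




/-- The freezing subgroup of an MR-subalgebra `A` of `𝓛ₙ` has cardinality
`2^{n-r} (n-r)! ∏ᵢ (i!)^{tᵢ}`. -/
theorem freeze_card (n : ℕ) (hn : 1 ≤ n) (A : Set (Cube n)) (hA : Cube.IsMRSub A)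
    (t : ℕ → ℕ) (ht : ∀ i, 2 * t i = (Cube.typeSet A i).ncard)
    (r : ℕ) (hr : r = ∑ i ∈ Finset.Icc 1 n, i * t i) :
    ({φ | φ ∈ Cube.AutSet n ∧ ∀ x ∈ A, φ x = x} : Set (Cube n ≃o Cube n)).ncard =
      2 ^ (n - r) * Nat.factorial (n - r) *
        ∏ i ∈ Finset.Icc 1 n, Nat.factorial i ^ t i :=
  Cube.freeze_count hn A hA t ht r hr
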